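/- (Approximate lifting implies Sato's condition.) Let μ₁, μ₂ be sub-distributions over A₁, A₂ and R ⊆ A₁ × A₂. If there exists an (ε,δ)-approximate lifting of R relating μ₁ and μ₂, then for every subset S₁ ⊆ A₁, μ₁(S₁) ≤ e^ε · μ₂(R(S₁)) + δ, where R(S₁) is the image of S₁ under R. -/

import Mathlib

open scoped ENNReal

noncomputable section

/-- A discrete sub-distribution: total mass at most 1. -/
def IsSubDist {A : Type*} (μ : A → ℝ≥0∞) : Prop := ∑' a, μ a ≤ 1

/-- Mass of a set under `μ`. -/
def setSum {A : Type*} (μ : A → ℝ≥0∞) (S : Set A) : ℝ≥0∞ := ∑' a : S, μ (a : A)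

/-- `μ` is a coupling of `(μ₁, μ₂)`: a joint sub-distribution with the given marginals. -/
def IsCoupling {A₁ A₂ : Type*} (μ : A₁ × A₂ → ℝ≥0∞)
    (μ₁ : A₁ → ℝ≥0∞) (μ₂ : A₂ → ℝ≥0∞) : Prop :=
  IsSubDist μ ∧ (∀ a₁, ∑' a₂, μ (a₁, a₂) = μ₁ a₁) ∧ (∀ a₂, ∑' a₁, μ (a₁, a₂) = μ₂ a₂)

/-- Image of a set under a relation. -/
def relImage {A₁ A₂ : Type*} (R : Set (A₁ × A₂)) (S : Set A₁) : Set A₂ :=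
  {a₂ | ∃ a₁ ∈ S, (a₁, a₂) ∈ R}

/-- `R⋆ = R ∪ (A₁ × {⋆}) ∪ ({⋆} × A₂)`, with `⋆` modelled by `none`. -/
def starRel {A₁ A₂ : Type*} (R : Set (A₁ × A₂)) : Set (Option A₁ × Option A₂) :=
  {p | match p with
       | (some a₁, some a₂) => (a₁, a₂) ∈ R
       | (some _, none) => True
       | (none, some _) => True
       | (none, none) => False}

/-- `(ε, δ)`-approximate `R`-lifting of `(μ₁, μ₂)`, witnessed by two
sub-distributions over `A₁⋆ × A₂⋆` with marginal, support, and ε-distance conditions. -/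
def ApproxLift {A₁ A₂ : Type*} (ε δ : ℝ) (R : Set (A₁ × A₂))
    (μ₁ : A₁ → ℝ≥0∞) (μ₂ : A₂ → ℝ≥0∞) : Prop :=
  ∃ μL μR : Option A₁ × Option A₂ → ℝ≥0∞,
    IsSubDist μL ∧ IsSubDist μR ∧
    (∀ a₁, ∑' o, μL (some a₁, o) = μ₁ a₁) ∧ (∀ o, μL (none, o) = 0) ∧
    (∀ a₂, ∑' o, μR (o, some a₂) = μ₂ a₂) ∧ (∀ o, μR (o, none) = 0) ∧
    {p | μL p ≠ 0} ⊆ starRel R ∧ {p | μR p ≠ 0} ⊆ starRel R ∧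
    ∀ S : Set (Option A₁ × Option A₂),
      setSum μL S ≤ ENNReal.ofReal (Real.exp ε) * setSum μR S + ENNReal.ofReal δ

theorem alift_to_sato {A₁ A₂ : Type*} [Countable A₁] [Countable A₂]
    (μ₁ : A₁ → ℝ≥0∞) (μ₂ : A₂ → ℝ≥0∞)
    (h₁ : IsSubDist μ₁) (h₂ : IsSubDist μ₂)
    (R : Set (A₁ × A₂)) (ε δ : ℝ)
    (h : ApproxLift ε δ R μ₁ μ₂) :
    ∀ S₁ : Set A₁,
      setSum μ₁ S₁ ≤ ENNReal.ofReal (Real.exp ε) * setSum μ₂ (relImage R S₁) +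
        ENNReal.ofReal δ := by
  obtain ⟨μL, μR, hLsd, hRsd, hLm, hLn, hRm, hRn, hLsupp, hRsupp, hdist⟩ := h
  intro S₁
  set T : Set A₂ := relImage R S₁ with hT
  set U : Set (Option A₁ × Option A₂) := Prod.fst ⁻¹' (some '' S₁) with hU
  set V : Set (Option A₁ × Option A₂) := Prod.snd ⁻¹' (some '' T) with hV
  have hL : setSum μL U = setSum μ₁ S₁ := by
    calc setSum μL U = ∑' p, U.indicator μL p := tsum_subtype _ _
      _ = ∑' (a : Option A₁) (b : Option A₂), U.indicator μL (a, b) := by exact ENNReal.tsum_prod (f := fun a b => U.indicator μL (a, b))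
      _ = ∑' a : Option A₁, Set.indicator (some '' S₁)
            (fun a => ∑' b, μL (a, b)) a := by
          refine tsum_congr fun a => ?_
          by_cases ha : a ∈ some '' S₁
          · simp only [Set.indicator_of_mem ha]
            refine tsum_congr fun b => ?_
            exact Set.indicator_of_mem (by simpa [hU] using ha) _
          · simp only [Set.indicator_of_notMem ha]
            refine (tsum_congr fun b => ?_).trans tsum_zero
            exact Set.indicator_of_notMem (by simpa [hU] using ha) _
      _ = ∑' a : (some '' S₁ : Set (Option A₁)), ∑' b, μL (a, b) :=
          (tsum_subtype _ _).symm
      _ = ∑' a : S₁, ∑' b, μL (some a, b) :=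
          tsum_image (fun a => ∑' b, μL (a, b)) ((Option.some_injective A₁).injOn)
      _ = ∑' a : S₁, μ₁ a := tsum_congr fun a => hLm a
      _ = setSum μ₁ S₁ := rfl
  have hRV : setSum μR V = setSum μ₂ T := by
    calc setSum μR V = ∑' p, V.indicator μR p := tsum_subtype _ _
      _ = ∑' (a : Option A₁) (b : Option A₂), V.indicator μR (a, b) := by exact ENNReal.tsum_prod (f := fun a b => V.indicator μR (a, b))
      _ = ∑' (b : Option A₂) (a : Option A₁), V.indicator μR (a, b) := ENNReal.tsum_comm
      _ = ∑' b : Option A₂, Set.indicator (some '' T)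
            (fun b => ∑' a, μR (a, b)) b := by
          refine tsum_congr fun b => ?_
          by_cases hb : b ∈ some '' T
          · simp only [Set.indicator_of_mem hb]
            refine tsum_congr fun a => ?_
            exact Set.indicator_of_mem (by simpa [hV] using hb) _
          · simp only [Set.indicator_of_notMem hb]
            refine (tsum_congr fun a => ?_).trans tsum_zero
            exact Set.indicator_of_notMem (by simpa [hV] using hb) _
      _ = ∑' b : (some '' T : Set (Option A₂)), ∑' a, μR (a, b) :=
          (tsum_subtype _ _).symm
      _ = ∑' b : T, ∑' a, μR (a, some b) :=
          tsum_image (fun b => ∑' a, μR (a, b)) ((Option.some_injective A₂).injOn)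
      _ = ∑' b : T, μ₂ b := tsum_congr fun b => hRm b
      _ = setSum μ₂ T := rfl
  have hUV : setSum μR U ≤ setSum μR V := by
    rw [setSum, setSum, tsum_subtype, tsum_subtype]
    refine ENNReal.tsum_le_tsum fun p => ?_
    rcases p with ⟨pa, pb⟩
    by_cases hp : (pa, pb) ∈ U
    · rw [Set.indicator_of_mem hp]
      by_cases hz : μR (pa, pb) = 0
      · rw [hz]; exact zero_le
      · have hstar := hRsupp hz
        obtain ⟨a₁, ha₁, hfst⟩ := hp
        simp only at hfst
        subst hfst
        cases pb with
        | none => exact absurd (hRn _) hz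
        | some b =>
          have hRab : (a₁, b) ∈ R := hstar
          have hpV : (some a₁, some b) ∈ V := ⟨b, ⟨a₁, ha₁, hRab⟩, rfl⟩
          rw [Set.indicator_of_mem hpV]
    · simp [Set.indicator_of_notMem hp]
  calc setSum μ₁ S₁ = setSum μL U := hL.symm
    _ ≤ ENNReal.ofReal (Real.exp ε) * setSum μR U + ENNReal.ofReal δ := hdist U
    _ ≤ ENNReal.ofReal (Real.exp ε) * setSum μ₂ T + ENNReal.ofReal δ := by
        gcongr
        exact hUV.trans_eq hRV
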